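/- Let S/R be a Frobenius extension of two-sided Noetherian rings and M a finitely generated S-module. Then Ext^i_R(M, ω) = 0 for all i ≥ 1 (for the underlying R-module) if and only if Ext^i_S(M, S ⊗_R ω) = 0 for all i ≥ 1. -/

import Mathlib

open CategoryTheory Limits

noncomputable section

/-- `Ext^n_A(M, N) = 0`, via Mathlib's `Ext` for the `ℤ`-linear abelian
category of left `A`-modules. -/
def ExtVanish (A : Type) [Ring A] (n : ℕ) (M N : Type) [AddCommGroup M] [Module A M]
    [AddCommGroup N] [Module A N] : Prop :=
  Subsingleton (((Ext ℤ (ModuleCat.{0} A) n).obj (Opposite.op (ModuleCat.of A M))).obj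
    (ModuleCat.of A N))

/-- A ring extension `l : R → S` is a Frobenius extension; this is encoded by the
classical equivalent data of a Frobenius system: an `R`-`R`-bimodule map `E : S → R`
together with dual bases `x₁,…,xₘ, y₁,…,yₘ ∈ S`.  This is equivalent to: `_R S` is
finitely generated projective and `_S S_R ≅ Hom_R(_R S_S, _R R_R)` as `S`-`R`-bimodules. -/
def IsFrobeniusExtension {R S : Type} [Ring R] [Ring S] (l : R →+* S) : Prop :=
  ∃ (E : S →+ R) (m : ℕ) (x y : Fin m → S),
    (∀ r s, E (l r * s) = r * E s) ∧ (∀ s r, E (s * l r) = E s * r) ∧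
    (∀ s, (∑ i, x i * l (E (y i * s))) = s) ∧
    (∀ s, (∑ i, l (E (s * x i)) * y i) = s)

/-- `(W, t)` realizes the induced module `S ⊗_R M` of the `R`-module `M` along
`l : R → S`: `t s m = s ⊗ m` is additive in each variable, `R`-balanced and
`S`-equivariant, and satisfies the universal property among `S`-modules. -/
def IsInducedTensor {R S : Type} [Ring R] [Ring S] (l : R →+* S)
    (M : Type) [AddCommGroup M] [Module R M]
    (W : Type) [AddCommGroup W] [Module S W] (t : S →+ M →+ W) : Prop :=
  (∀ s r m, t (s * l r) m = t s (r • m)) ∧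
  (∀ s' s m, t (s' * s) m = s' • t s m) ∧
  (∀ (V : Type) [AddCommGroup V] [Module S V] (b : S →+ M →+ V),
    (∀ s r m, b (s * l r) m = b s (r • m)) → (∀ s' s m, b (s' * s) m = s' • b s m) →
    ∃! h : W →ₗ[S] V, ∀ s m, h (t s m) = b s m)

/-! ### Auxiliary material -/

namespace FrobAux

variable {R S : Type} [Ring R] [Ring S] (l : R →+* S)

/-- `S` as an `R`-module object -/
abbrev SRmod : ModuleCat R := (ModuleCat.restrictScalars.{0} l).obj (ModuleCat.of S S)

section unb
variable (ω : Type) [AddCommGroup ω] [Module R ω]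

/-- the carrier of the coextended module, as a plain linear-map type -/
abbrev CoextTy : Type := ↥(SRmod l) →ₗ[R] ω

variable {ω}

/-- evaluation as an `AddMonoidHom` -/
def evAt (z : S) : CoextTy l ω →+ ω where
  toFun g := g z
  map_zero' := rfl
  map_add' _ _ := rfl

theorem coext_smul_apply (s : S) (g : CoextTy l ω) (z : S) :
    (s • g : CoextTy l ω) z = g (z * s) := rfl

theorem coext_rsmul (r : R) (z : S) :
    @HSMul.hSMul R ↥(SRmod l) ↥(SRmod l) _ r z = (l r * z : S) := rfl

end unb

theorem proj_aux (E : S →+ R) (m : ℕ) (x y : Fin m → S)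
    (hE1 : ∀ r s, E (l r * s) = r * E s)
    (hxy2 : ∀ s, (∑ i, l (E (s * x i)) * y i) = s) :
    letI : Module R S := Module.compHom S l
    Module.Projective R S := by
  letI : Module R S := Module.compHom S l
  have smul_def : ∀ (r : R) (s : S), r • s = l r * s := fun r s => rfl
  refine Module.Projective.of_split (M := Fin m → R)
    { toFun := fun (s : S) i => E (s * x i), map_add' := ?_, map_smul' := ?_ }
    { toFun := fun g => ∑ i, l (g i) * y i, map_add' := ?_, map_smul' := ?_ } ?_
  · intro a b; funext i; simp [add_mul]
  · intro r s; funext i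
    show E ((r • s) * x i) = r * E (s * x i)
    rw [smul_def, mul_assoc, hE1]
  · intro a b; simp [add_mul, Finset.sum_add_distrib]
  · intro r g
    show ∑ i, l (r * g i) * y i = r • ∑ i, l (g i) * y i
    rw [smul_def, Finset.mul_sum]
    simp [map_mul, mul_assoc]
  · ext s
    exact hxy2 s

theorem wEquiv (E : S →+ R) (m : ℕ) (x y : Fin m → S)
    (hE1 : ∀ r s, E (l r * s) = r * E s) (hE2 : ∀ s r, E (s * l r) = E s * r)
    (hxy1 : ∀ s, (∑ i, x i * l (E (y i * s))) = s)
    (hxy2 : ∀ s, (∑ i, l (E (s * x i)) * y i) = s)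
    (ω : Type) [AddCommGroup ω] [Module R ω]
    (W : Type) [AddCommGroup W] [Module S W] (t : S →+ ω →+ W)
    (hW : IsInducedTensor l ω W t) :
    ∃ (h : W →ₗ[S] CoextTy l ω) (ψ : CoextTy l ω →ₗ[S] W),
      (h.comp ψ = LinearMap.id) ∧ (ψ.comp h = LinearMap.id) ∧
      (∀ s mm (z : S), (h (t s mm) : CoextTy l ω) z = E (z * s) • mm) ∧
      (∀ g : CoextTy l ω, ψ g = ∑ i, t (x i) (g (y i))) := by
  classical
  let bf : S → ω → CoextTy l ω := fun s mm =>
    { toFun := fun (z : S) => E (z * s) • mm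
      map_add' := fun (z1 z2 : S) => by
        show E ((z1 + z2) * s) • mm = E (z1 * s) • mm + E (z2 * s) • mm
        rw [add_mul, map_add, add_smul]
      map_smul' := fun r (z : S) => by
        show E ((l r * z) * s) • mm = r • (E (z * s) • mm)
        rw [mul_assoc, hE1, mul_smul] }
  have bf_apply : ∀ s mm (z : S), bf s mm z = E (z * s) • mm := fun _ _ _ => rfl
  let b : S →+ ω →+ CoextTy l ω :=
    { toFun := fun s =>
        { toFun := fun mm => bf s mm
          map_zero' := LinearMap.ext fun (z : S) => by simp [bf_apply]; rfl
          map_add' := fun m1 m2 => LinearMap.ext fun (z : S) => by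
            simp [bf_apply, smul_add]; rfl }
      map_zero' := AddMonoidHom.ext fun mm => LinearMap.ext fun (z : S) => by simp [bf_apply]; rfl
      map_add' := fun s1 s2 => AddMonoidHom.ext fun mm => LinearMap.ext fun (z : S) => by
        show E (z * (s1 + s2)) • mm = E (z * s1) • mm + E (z * s2) • mm
        rw [mul_add, map_add, add_smul] }
  obtain ⟨h, hh, huniq⟩ := hW.2.2 (CoextTy l ω) b
    (fun s r mm => LinearMap.ext fun (z : S) => by
      show E (z * (s * l r)) • mm = E (z * s) • (r • mm)
      rw [← mul_assoc, hE2, mul_smul])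
    (fun s' s mm => LinearMap.ext fun (z : S) => by
      rw [coext_smul_apply]
      show E (z * (s' * s)) • mm = E ((z * s') * s) • mm
      rw [mul_assoc])
  let ψ : CoextTy l ω →ₗ[S] W :=
    { toFun := fun g => ∑ i, t (x i) (g (y i))
      map_add' := fun g1 g2 => by
        show ∑ i, t (x i) (g1 (y i) + g2 (y i)) = _
        simp only [map_add, Finset.sum_add_distrib]
      map_smul' := fun s g => by
        show ∑ i, t (x i) ((s • g) (y i)) = s • ∑ i, t (x i) (g (y i))
        rw [Finset.smul_sum]
        have step : ∀ i, s • t (x i) (g (y i)) = t (s * x i) (g (y i)) :=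
          fun i => (hW.2.1 s (x i) _).symm
        rw [Finset.sum_congr rfl fun i _ => step i]
        have expand : ∀ i, t (s * x i) (g (y i))
            = ∑ j, t (x j) (E (y j * (s * x i)) • g (y i)) := by
          intro i
          conv_lhs => rw [← hxy1 (s * x i)]
          rw [map_sum, AddMonoidHom.finset_sum_apply]
          refine Finset.sum_congr rfl fun j _ => ?_
          rw [hW.1]
        rw [Finset.sum_congr rfl fun i _ => expand i, Finset.sum_comm]
        refine Finset.sum_congr rfl fun j _ => ?_
        rw [coext_smul_apply]
        have e1 : ∀ i, E (y j * (s * x i)) • g (y i) = g (l (E ((y j * s) * x i)) * y i) := by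
          intro i
          have h2 := g.map_smul (E ((y j * s) * x i)) (y i)
          rw [coext_rsmul] at h2
          rw [← mul_assoc]
          exact h2.symm
        have e4 : ∑ i, t (x j) (E (y j * (s * x i)) • g (y i)) = t (x j) (g (y j * s)) := by
          rw [← map_sum (t (x j))]
          congr 1
          rw [Finset.sum_congr rfl fun i _ => e1 i]
          exact (map_sum g (fun i => l (E ((y j * s) * x i)) * y i) Finset.univ).symm.trans (congrArg g (hxy2 (y j * s)))
        exact e4.symm }
  refine ⟨h, ψ, ?_, ?_, fun s mm z => by rw [hh]; rfl, fun g => rfl⟩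
  · -- h ∘ ψ = id
    refine LinearMap.ext fun g => LinearMap.ext fun (z : S) => ?_
    show (h (∑ i, t (x i) (g (y i))) : CoextTy l ω) z = g z
    rw [map_sum]
    rw [show ((∑ i, h (t (x i) (g (y i))) : CoextTy l ω) z)
        = ∑ i, (h (t (x i) (g (y i))) : CoextTy l ω) z from map_sum (evAt l z) _ _]
    have e2 : ∀ i, (h (t (x i) (g (y i))) : CoextTy l ω) z = g (l (E (z * x i)) * y i) := by
      intro i
      rw [hh]
      have h2 := g.map_smul (E (z * x i)) (y i)
      rw [coext_rsmul] at h2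
      exact h2.symm
    rw [Finset.sum_congr rfl fun i _ => e2 i]
    exact (map_sum g (fun i => l (E (z * x i)) * y i) Finset.univ).symm.trans (congrArg g (hxy2 z))
  · -- ψ ∘ h = id
    obtain ⟨hid, -, hiduniq⟩ := hW.2.2 W t hW.1 hW.2.1
    have e1 : ψ.comp h = hid := by
      apply hiduniq
      intro s mm
      show ψ (h (t s mm)) = t s mm
      rw [hh]
      show ∑ i, t (x i) (bf s mm (y i)) = t s mm
      have e3 : ∀ i, t (x i) (bf s mm (y i)) = t (x i * l (E (y i * s))) mm := by
        intro i
        rw [show bf s mm (y i) = E (y i * s) • mm from rfl, hW.1]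
      rw [Finset.sum_congr rfl fun i _ => e3 i,
        show (∑ i, t (x i * l (E (y i * s))) mm) = t (∑ i, x i * l (E (y i * s))) mm by
          rw [map_sum, AddMonoidHom.finset_sum_apply], hxy1]
    have e2 : (LinearMap.id : W →ₗ[S] W) = hid := hiduniq _ (fun s mm => rfl)
    rw [e1, e2]

open ModuleCat.RestrictionCoextensionAdj in
theorem ext_iso_aux (E : S →+ R) (m : ℕ) (x y : Fin m → S)
    (hE1 : ∀ r s, E (l r * s) = r * E s) (hE2 : ∀ s r, E (s * l r) = E s * r)
    (hxy1 : ∀ s, (∑ i, x i * l (E (y i * s))) = s)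
    (hxy2 : ∀ s, (∑ i, l (E (s * x i)) * y i) = s)
    (ω : Type) [AddCommGroup ω] [Module R ω]
    (W : Type) [AddCommGroup W] [Module S W] (t : S →+ ω →+ W)
    (hW : IsInducedTensor l ω W t) (Mod : ModuleCat.{0} S) (n : ℕ) :
    Subsingleton (((Ext ℤ (ModuleCat.{0} R) n).obj
        (Opposite.op ((ModuleCat.restrictScalars.{0} l).obj Mod))).obj (ModuleCat.of R ω)) ↔
    Subsingleton (((Ext ℤ (ModuleCat.{0} S) n).obj (Opposite.op Mod)).obj (ModuleCat.of S W)) := by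
  classical
  haveI : (ModuleCat.restrictScalars.{0} l).Additive := { map_add := rfl }
  haveI : PreservesFiniteLimits (ModuleCat.restrictScalars.{0} l) := by
    constructor
    intro J _ _
    exact ⟨fun {F} => ModuleCat.preservesLimit_restrictScalars l F⟩
  haveI : PreservesFiniteColimits (ModuleCat.restrictScalars.{0} l) := by
    constructor
    intro J _ _
    exact ⟨fun {F} => inferInstance⟩
  haveI : Module.Projective R ((ModuleCat.restrictScalars.{0} l).obj (ModuleCat.of S S)) :=
    proj_aux l E m x y hE1 hxy2
  haveI : (ModuleCat.coextendScalars.{0,0,0} l).PreservesEpimorphisms := by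
    constructor
    intro A B g hg
    rw [ModuleCat.epi_iff_surjective] at hg ⊢
    intro h0
    obtain ⟨h', hh'⟩ := Module.projective_lifting_property g.hom h0 hg
    exact ⟨h', LinearMap.ext fun s => congrFun (congrArg DFunLike.coe hh') s⟩
  obtain ⟨P⟩ := (inferInstance : HasProjectiveResolution Mod).out
  obtain ⟨h, ψ, hcomp1, hcomp2, -, -⟩ := wEquiv l E m x y hE1 hE2 hxy1 hxy2 ω W t hW
  let Vobj : ModuleCat S := (ModuleCat.coextendScalars.{0,0,0} l).obj (ModuleCat.of R ω)
  let hHom : ModuleCat.of S W ⟶ Vobj := ModuleCat.ofHom h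
  let ψHom : Vobj ⟶ ModuleCat.of S W := ModuleCat.ofHom ψ
  have hψ : ψHom ≫ hHom = 𝟙 Vobj := ModuleCat.hom_ext hcomp1
  have hψ' : hHom ≫ ψHom = 𝟙 (ModuleCat.of S W) := ModuleCat.hom_ext hcomp2
  let F := ModuleCat.restrictScalars.{0} l
  haveI := P.quasiIso
  let Q : ProjectiveResolution (F.obj Mod) :=
    { complex := (F.mapHomologicalComplex _).obj P.complex
      projective := fun n => Adjunction.map_projective
        (ModuleCat.restrictCoextendScalarsAdj.{0} l) _ (P.projective n)
      π := (F.mapHomologicalComplex _).map P.π ≫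
        (HomologicalComplex.singleMapHomologicalComplex F (ComplexShape.down ℕ) 0).hom.app Mod
      quasiIso := inferInstance }
  -- the isomorphism of Hom complexes
  have fr_nat : ∀ {Y' Y : ModuleCat S} (f : Y' ⟶ Y) (g : F.obj Y ⟶ ModuleCat.of R ω),
      HomEquiv.fromRestriction l (F.map f ≫ g) = f ≫ HomEquiv.fromRestriction l g := by
    intro Y' Y f g
    refine ModuleCat.hom_ext (LinearMap.ext fun y0 => LinearMap.ext fun (s0 : S) => ?_)
    show g.hom (f.hom (s0 • y0)) = g.hom (s0 • f.hom y0)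
    rw [f.hom.map_smul]
  have fr_add : ∀ {Y : ModuleCat S} (g1 g2 : F.obj Y ⟶ ModuleCat.of R ω),
      HomEquiv.fromRestriction l (g1 + g2)
        = HomEquiv.fromRestriction l g1 + HomEquiv.fromRestriction l g2 := by
    intro Y g1 g2
    exact ModuleCat.hom_ext (LinearMap.ext fun y0 => LinearMap.ext fun s0 => rfl)
  have trf : ∀ {Y : ModuleCat S} (g : F.obj Y ⟶ ModuleCat.of R ω),
      HomEquiv.toRestriction l (HomEquiv.fromRestriction l g) = g := by
    intro Y g
    refine ModuleCat.hom_ext (LinearMap.ext fun y0 => ?_)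
    show g ((1 : S) • y0) = g y0
    rw [one_smul]
  have frt : ∀ {Y : ModuleCat S} (G : Y ⟶ Vobj),
      HomEquiv.fromRestriction l (HomEquiv.toRestriction l G) = G := by
    intro Y G
    refine ModuleCat.hom_ext (LinearMap.ext fun y0 => LinearMap.ext fun (s0 : S) => ?_)
    have h2 : G (s0 • y0) = s0 • G y0 := G.hom.map_smul s0 y0
    have h3 := congrArg (fun v : CoextTy l ω => v (1 : S)) h2
    exact h3.trans (congrArg (G y0) (one_mul s0))
  have tr_add : ∀ {Y : ModuleCat S} (h1 h2 : Y ⟶ Vobj),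
      HomEquiv.toRestriction l (h1 + h2)
        = HomEquiv.toRestriction l h1 + HomEquiv.toRestriction l h2 := by
    intro Y h1 h2
    exact ModuleCat.hom_ext (LinearMap.ext fun y0 => rfl)
  let fwdHom : ∀ Y : ModuleCat S,
      (F.obj Y ⟶ ModuleCat.of R ω) →+ (Y ⟶ ModuleCat.of S W) := fun Y =>
    AddMonoidHom.mk' (fun g => HomEquiv.fromRestriction l g ≫ ψHom)
      (fun g1 g2 => by
        show HomEquiv.fromRestriction l (g1 + g2) ≫ ψHom
          = HomEquiv.fromRestriction l g1 ≫ ψHom + HomEquiv.fromRestriction l g2 ≫ ψHom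
        rw [fr_add, Preadditive.add_comp])
  let bwdHom : ∀ Y : ModuleCat S,
      (Y ⟶ ModuleCat.of S W) →+ (F.obj Y ⟶ ModuleCat.of R ω) := fun Y =>
    AddMonoidHom.mk' (fun G => HomEquiv.toRestriction l (G ≫ hHom))
      (fun G1 G2 => by
        show HomEquiv.toRestriction l ((G1 + G2) ≫ hHom)
          = HomEquiv.toRestriction l (G1 ≫ hHom) + HomEquiv.toRestriction l (G2 ≫ hHom)
        rw [Preadditive.add_comp, tr_add])
  let e : ∀ Y : ModuleCat S, ModuleCat.of ℤ (F.obj Y ⟶ ModuleCat.of R ω)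
      ≅ ModuleCat.of ℤ (Y ⟶ ModuleCat.of S W) := fun Y =>
    { hom := ModuleCat.ofHom
        { toFun := fwdHom Y
          map_add' := (fwdHom Y).map_add
          map_smul' := fun z g => by simpa using map_intCast_smul (fwdHom Y) ℤ ℤ z g }
      inv := ModuleCat.ofHom
        { toFun := bwdHom Y
          map_add' := (bwdHom Y).map_add
          map_smul' := fun z G => by simpa using map_intCast_smul (bwdHom Y) ℤ ℤ z G }
      hom_inv_id := ModuleCat.hom_ext (LinearMap.ext fun g => show HomEquiv.toRestriction l
          ((HomEquiv.fromRestriction l g ≫ ψHom) ≫ hHom) = g by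
        rw [Category.assoc, hψ, Category.comp_id, trf])
      inv_hom_id := ModuleCat.hom_ext (LinearMap.ext fun G => show HomEquiv.fromRestriction l
          (HomEquiv.toRestriction l (G ≫ hHom)) ≫ ψHom = G by
        rw [frt, Category.assoc, hψ', Category.comp_id]) }
  let isoC : Q.complex.linearYonedaObj ℤ (ModuleCat.of R ω)
      ≅ P.complex.linearYonedaObj ℤ (ModuleCat.of S W) :=
    HomologicalComplex.Hom.isoOfComponents
      (fun i => e (P.complex.X i))
      (fun i j hij => by
        refine ModuleCat.hom_ext (LinearMap.ext fun (g : F.obj (P.complex.X i) ⟶ ModuleCat.of R ω) => ?_)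
        show P.complex.d j i ≫ (HomEquiv.fromRestriction l g ≫ ψHom)
          = HomEquiv.fromRestriction l (F.map (P.complex.d j i) ≫ g) ≫ ψHom
        rw [fr_nat, Category.assoc])
  let e3 := (HomologicalComplex.homologyFunctor (ModuleCat ℤ) (ComplexShape.up ℕ) n).mapIso isoC
  let eR := Q.isoExt (R := ℤ) n (ModuleCat.of R ω)
  let eS := P.isoExt (R := ℤ) n (ModuleCat.of S W)
  exact Equiv.subsingleton_congr ((forget (ModuleCat ℤ)).mapIso (eR ≪≫ e3 ≪≫ eS.symm)).toEquiv

end FrobAux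

/-- Let `S/R` be a Frobenius extension of two-sided Noetherian
rings and `M` a finitely generated `S`-module.  Then `Ext^i_R(M, ω) = 0` for all
`i ≥ 1` (for the underlying `R`-module) iff `Ext^i_S(M, S ⊗_R ω) = 0` for all
`i ≥ 1`, where `(W, t)` realizes `S ⊗_R ω`. -/
theorem extVanish_restrict_iff_extVanish_inducedTensor
    (R S : Type) [Ring R] [Ring S] [IsNoetherianRing R] [IsNoetherianRing Rᵐᵒᵖ]
    [IsNoetherianRing S] [IsNoetherianRing Sᵐᵒᵖ] (l : R →+* S)
    (hFrob : IsFrobeniusExtension l)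
    (ω : Type) [AddCommGroup ω] [Module R ω] [Module.Finite R ω]
    (W : Type) [AddCommGroup W] [Module S W] (t : S →+ ω →+ W)
    (hW : IsInducedTensor l ω W t)
    (M : Type) [AddCommGroup M] [Module S M] [Module.Finite S M] :
    letI : Module R M := Module.compHom M l
    ((∀ i, 1 ≤ i → ExtVanish R i M ω) ↔ (∀ i, 1 ≤ i → ExtVanish S i M W)) := by
  obtain ⟨E, m, x, y, hE1, hE2, hxy1, hxy2⟩ := hFrob
  letI : Module R M := Module.compHom M l
  have key : ∀ i : ℕ, ExtVanish R i M ω ↔ ExtVanish S i M W := fun i =>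
    FrobAux.ext_iso_aux l E m x y hE1 hE2 hxy1 hxy2 ω W t hW (ModuleCat.of S M) i
  exact ⟨fun H i hi => (key i).mp (H i hi), fun H i hi => (key i).mpr (H i hi)⟩

end
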